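/- Let S be a nonempty finite set of nonnegative integers, and for each k ∈ S let J_k be a nonnegative integer, β_{k,1}, …, β_{k,J_k} real numbers, and ξ_{k,1}, …, ξ_{k,J_k} strictly increasing knot vectors in [0,1]^{k+2}. Define η(x) = Σ_{k ∈ S} Σ_{l=1}^{J_k} β_{k,l} · B_k(x; ξ_{k,l}) for x ∈ [0,1]. Then for every 1 ≤ p, q < ∞ and every α with 0 < α < min(S) + 1/p, the function η belongs to the Besov space B^α_{p,q}([0,1]). (Deterministic finite-sum content of Theorem 2 of the paper, which holds for every realization of the LABS mean function driven by finite Lévy measures.) -/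

import Mathlib

open MeasureTheory Set
open scoped ENNReal

/-- B-spline basis function of degree `k` with knot vector `ξ = (ξ₀, …, ξ_{k+1})`
(0-indexed), defined by the Cox–de Boor recursion. -/
noncomputable def bspline : (k : ℕ) → (Fin (k + 2) → ℝ) → ℝ → ℝ
  | 0, ξ, x => if ξ 0 ≤ x ∧ x < ξ 1 then 1 else 0
  | (m + 1), ξ, x =>
      (x - ξ 0) / (ξ ⟨m + 1, by omega⟩ - ξ 0) * bspline m (fun i => ξ i.castSucc) x
      + (ξ (Fin.last (m + 2)) - x) / (ξ (Fin.last (m + 2)) - ξ 1) *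
          bspline m (fun i => ξ i.succ) x

/-- The `r`-th order forward finite difference `Δ_h^r f (x)`. -/
noncomputable def finiteDiff (r : ℕ) (h : ℝ) (f : ℝ → ℝ) (x : ℝ) : ℝ :=
  ∑ j ∈ Finset.range (r + 1), (r.choose j : ℝ) * (-1 : ℝ) ^ (r - j) * f (x + j * h)

/-- The `r`-th order modulus of smoothness `ω_r(f, t)_p` on `[0,1]`. -/
noncomputable def modSmooth (p : ℝ) (r : ℕ) (f : ℝ → ℝ) (t : ℝ) : ℝ :=
  sSup ((fun h => (∫ x in Set.Ioo (0 : ℝ) (1 - r * h), |finiteDiff r h f x| ^ p) ^ (1 / p)) ''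
    Set.Ioc 0 t)

/-- The smallest integer `r` with `r > α` (for `α > 0`). -/
noncomputable def besovR (α : ℝ) : ℕ := ⌊α⌋₊ + 1

/-- The Besov seminorm `|f|_{B^α_{p,q}}` on `[0,1]`, valued in `ℝ≥0∞`. -/
noncomputable def besovSeminorm (p q α : ℝ) (f : ℝ → ℝ) : ℝ≥0∞ :=
  (∫⁻ t in Set.Ioi (0 : ℝ),
      ENNReal.ofReal ((t ^ (-α) * modSmooth p (besovR α) f t) ^ q / t)) ^ (1 / q)

/-- Membership in the Besov space `B^α_{p,q}([0,1])`: `f ∈ L^p([0,1])` and the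
Besov seminorm is finite. -/
def memBesov (p q α : ℝ) (f : ℝ → ℝ) : Prop :=
  MemLp f (ENNReal.ofReal p) (volume.restrict (Set.Icc (0 : ℝ) 1)) ∧
  besovSeminorm p q α f < ⊤

namespace BesovAux
open Function
open scoped fwdDiff

lemma finiteDiff_eq_fwdDiff (r : ℕ) (h : ℝ) (f : ℝ → ℝ) (x : ℝ) :
    finiteDiff r h f x = (fwdDiff h)^[r] f x := by
  rw [fwdDiff_iter_eq_sum_shift, finiteDiff]
  refine Finset.sum_congr rfl fun j hj => ?_
  push_cast [zsmul_eq_mul, nsmul_eq_mul]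
  ring

lemma finiteDiff_zero (h : ℝ) (f : ℝ → ℝ) (x : ℝ) : finiteDiff 0 h f x = f x := by
  simp [finiteDiff]

lemma finiteDiff_succ (r : ℕ) (h : ℝ) (f : ℝ → ℝ) (x : ℝ) :
    finiteDiff (r + 1) h f x = finiteDiff r h (fwdDiff h f) x := by
  simp only [finiteDiff_eq_fwdDiff, Function.iterate_succ_apply]

lemma finiteDiff_succ' (r : ℕ) (h : ℝ) (f : ℝ → ℝ) (x : ℝ) :
    finiteDiff (r + 1) h f x = finiteDiff r h f (x + h) - finiteDiff r h f x := by
  simp only [finiteDiff_eq_fwdDiff, Function.iterate_succ_apply', fwdDiff]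

lemma finiteDiff_congr {r : ℕ} {h : ℝ} {f g : ℝ → ℝ} {x : ℝ}
    (hfg : ∀ j ≤ r, f (x + j * h) = g (x + j * h)) :
    finiteDiff r h f x = finiteDiff r h g x := by
  unfold finiteDiff
  refine Finset.sum_congr rfl fun j hj => ?_
  rw [hfg j (by simpa [Nat.lt_succ_iff] using hj)]

lemma finiteDiff_linear (r : ℕ) (h A B : ℝ) (u v : ℝ → ℝ) (x : ℝ) :
    finiteDiff r h (fun y => A * u y + B * v y) x
      = A * finiteDiff r h u x + B * finiteDiff r h v x := by
  unfold finiteDiff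
  rw [Finset.mul_sum, Finset.mul_sum, ← Finset.sum_add_distrib]
  refine Finset.sum_congr rfl fun j hj => ?_
  ring

lemma finiteDiff_abs_le {r : ℕ} {h : ℝ} {f : ℝ → ℝ} {x : ℝ} {M : ℝ}
    (hM : ∀ y, |f y| ≤ M) : |finiteDiff r h f x| ≤ 2 ^ r * M := by
  calc |finiteDiff r h f x| ≤ ∑ j ∈ Finset.range (r + 1),
      |(r.choose j : ℝ) * (-1 : ℝ) ^ (r - j) * f (x + j * h)| := by
        exact Finset.abs_sum_le_sum_abs _ _
    _ ≤ ∑ j ∈ Finset.range (r + 1), (r.choose j : ℝ) * M := by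
        refine Finset.sum_le_sum fun j hj => ?_
        rw [abs_mul, abs_mul, abs_pow, abs_neg, abs_one, one_pow, mul_one,
          Nat.abs_cast]
        exact mul_le_mul_of_nonneg_left (hM _) (Nat.cast_nonneg _)
    _ = 2 ^ r * M := by
        rw [← Finset.sum_mul]
        norm_cast
        rw [Nat.sum_range_choose]

lemma bspline_succ_apply (m : ℕ) (ξ : Fin (m + 3) → ℝ) (x : ℝ) :
    bspline (m + 1) ξ x =
      (x - ξ 0) / (ξ ⟨m + 1, by omega⟩ - ξ 0) * bspline m (fun i => ξ i.castSucc) x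
      + (ξ (Fin.last (m + 2)) - x) / (ξ (Fin.last (m + 2)) - ξ 1) *
          bspline m (fun i => ξ i.succ) x := rfl

lemma measurable_bspline : ∀ (k : ℕ) (ξ : Fin (k + 2) → ℝ), Measurable (bspline k ξ) := by
  intro k
  induction k with
  | zero =>
    intro ξ
    have : bspline 0 ξ = Set.indicator (Ico (ξ 0) (ξ 1)) (fun _ => (1 : ℝ)) := by
      funext x
      simp [bspline, Set.indicator, Set.mem_Ico]
    rw [this]
    exact (measurable_const).indicator measurableSet_Ico
  | succ m IH =>
    intro ξ
    refine Measurable.add (Measurable.mul ?_ (IH _)) (Measurable.mul ?_ (IH _)) <;>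
      fun_prop

lemma bspline_zero_of_notMem : ∀ (k : ℕ) (ξ : Fin (k + 2) → ℝ), StrictMono ξ → ∀ x : ℝ,
    (x < ξ 0 ∨ ξ (Fin.last (k + 1)) ≤ x) → bspline k ξ x = 0 := by
  intro k
  induction k with
  | zero =>
    intro ξ hξ x hx
    rcases hx with hx | hx
    · simp only [bspline]; rw [if_neg]; rintro ⟨h1, -⟩; linarith
    · simp only [bspline]; rw [if_neg]; rintro ⟨-, h2⟩
      have h3 : ξ 1 = ξ (Fin.last 1) := rfl
      rw [h3] at h2; exact absurd hx (not_le.mpr h2)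
  | succ m IH =>
    intro ξ hξ x hx
    rw [bspline_succ_apply]
    have hm1 : StrictMono (fun i : Fin (m+2) => ξ i.castSucc) :=
      hξ.comp Fin.strictMono_castSucc
    have hm2 : StrictMono (fun i : Fin (m+2) => ξ i.succ) :=
      hξ.comp Fin.strictMono_succ
    have hc1 : x < (fun i : Fin (m+2) => ξ i.castSucc) 0 ∨
        (fun i : Fin (m+2) => ξ i.castSucc) (Fin.last (m+1)) ≤ x := by
      rcases hx with hx | hx
      · left; simpa using hx
      · right
        have h1 : ξ ((Fin.last (m+1)).castSucc) ≤ ξ (Fin.last (m+2)) :=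
          le_of_lt (hξ (by simp [Fin.lt_def]))
        have h2 : ξ (Fin.last (m+1+1)) = ξ (Fin.last (m+2)) := rfl
        show ξ ((Fin.last (m+1)).castSucc) ≤ x
        rw [h2] at hx; linarith
    have hc2 : x < (fun i : Fin (m+2) => ξ i.succ) 0 ∨
        (fun i : Fin (m+2) => ξ i.succ) (Fin.last (m+1)) ≤ x := by
      rcases hx with hx | hx
      · left
        have h1 : ξ 0 < ξ ((0 : Fin (m+2)).succ) := hξ (by simp [Fin.lt_def])
        show x < ξ ((0 : Fin (m+2)).succ)
        linarith
      · right
        have h2 : (Fin.last (m+1)).succ = Fin.last (m+1+1) := rfl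
        show ξ ((Fin.last (m+1)).succ) ≤ x
        rw [h2]; exact hx
    rw [IH _ hm1 x hc1, IH _ hm2 x hc2, mul_zero, mul_zero, add_zero]

lemma bspline_bound : ∀ (k : ℕ) (ξ : Fin (k + 2) → ℝ), StrictMono ξ →
    ∃ M : ℝ, 0 ≤ M ∧ ∀ x : ℝ, |bspline k ξ x| ≤ M := by
  intro k
  induction k with
  | zero =>
    intro ξ hξ
    refine ⟨1, zero_le_one, fun x => ?_⟩
    simp only [bspline]
    split <;> simp
  | succ m IH =>
    intro ξ hξ
    have hm1 : StrictMono (fun i : Fin (m+2) => ξ i.castSucc) :=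
      hξ.comp Fin.strictMono_castSucc
    have hm2 : StrictMono (fun i : Fin (m+2) => ξ i.succ) :=
      hξ.comp Fin.strictMono_succ
    obtain ⟨M1, hM1, hF⟩ := IH _ hm1
    obtain ⟨M2, hM2, hG⟩ := IH _ hm2
    have hd1 : (0:ℝ) < ξ ⟨m + 1, by omega⟩ - ξ 0 := by
      have := hξ (show (0 : Fin (m+3)) < ⟨m+1, by omega⟩ by simp [Fin.lt_def])
      linarith
    have hd2 : (0:ℝ) < ξ (Fin.last (m + 2)) - ξ 1 := by
      have := hξ (show (1 : Fin (m+3)) < Fin.last (m+2) by simp [Fin.lt_def])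
      linarith
    have hwid : (0:ℝ) ≤ ξ (Fin.last (m+2)) - ξ 0 := by
      have := hξ (show (0 : Fin (m+3)) < Fin.last (m+2) by simp [Fin.lt_def])
      linarith
    set W := ξ (Fin.last (m+2)) - ξ 0 with hW
    refine ⟨W / (ξ ⟨m + 1, by omega⟩ - ξ 0) * M1 + W / (ξ (Fin.last (m + 2)) - ξ 1) * M2,
      by positivity, fun x => ?_⟩
    by_cases hx : x < ξ 0 ∨ ξ (Fin.last (m + 1 + 1)) ≤ x
    · rw [bspline_zero_of_notMem _ _ hξ x hx]
      simp only [abs_zero]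
      positivity
    · push_neg at hx
      obtain ⟨hx0, hx1⟩ := hx
      rw [bspline_succ_apply]
      have h1 : |(x - ξ 0) / (ξ ⟨m + 1, by omega⟩ - ξ 0)| ≤ W / (ξ ⟨m + 1, by omega⟩ - ξ 0) := by
        rw [abs_div, abs_of_pos hd1, abs_of_nonneg (by linarith)]
        have heq : ξ (Fin.last (m+1+1)) = ξ (Fin.last (m+2)) := rfl
        have hx1' := heq ▸ hx1
        gcongr
        rw [hW]; linarith
      have h2 : |(ξ (Fin.last (m + 2)) - x) / (ξ (Fin.last (m + 2)) - ξ 1)| ≤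
          W / (ξ (Fin.last (m + 2)) - ξ 1) := by
        have hlt : x < ξ (Fin.last (m+2)) := hx1
        rw [abs_div, abs_of_pos hd2, abs_of_nonneg (by linarith)]
        have h01 : ξ 0 ≤ ξ 1 := le_of_lt (hξ (by simp [Fin.lt_def]))
        gcongr
        rw [hW]; linarith
      calc |_| ≤ |(x - ξ 0) / (ξ ⟨m + 1, by omega⟩ - ξ 0) * bspline m (fun i => ξ i.castSucc) x|
            + |(ξ (Fin.last (m + 2)) - x) / (ξ (Fin.last (m + 2)) - ξ 1) *
                bspline m (fun i => ξ i.succ) x| := abs_add_le _ _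
        _ ≤ W / (ξ ⟨m + 1, by omega⟩ - ξ 0) * M1 + W / (ξ (Fin.last (m + 2)) - ξ 1) * M2 := by
            rw [abs_mul, abs_mul]
            exact add_le_add
              (mul_le_mul h1 (hF x) (abs_nonneg _) (by positivity))
              (mul_le_mul h2 (hG x) (abs_nonneg _) (by positivity))


noncomputable def dsp : (k : ℕ) → (Fin (k + 2) → ℝ) → ℝ → ℝ
  | 0, _, _ => 0
  | (m + 1), ξ, x =>
      ((m + 1 : ℝ) / (ξ ⟨m + 1, by omega⟩ - ξ 0)) * bspline m (fun i => ξ i.castSucc) x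
      - ((m + 1 : ℝ) / (ξ (Fin.last (m + 2)) - ξ 1)) * bspline m (fun i => ξ i.succ) x

lemma dsp_succ_apply (m : ℕ) (ξ : Fin (m + 3) → ℝ) (x : ℝ) :
    dsp (m + 1) ξ x =
      ((m + 1 : ℝ) / (ξ ⟨m + 1, by omega⟩ - ξ 0)) * bspline m (fun i => ξ i.castSucc) x
      - ((m + 1 : ℝ) / (ξ (Fin.last (m + 2)) - ξ 1)) * bspline m (fun i => ξ i.succ) x := rfl

lemma measurable_dsp (k : ℕ) (ξ : Fin (k + 2) → ℝ) : Measurable (dsp k ξ) := by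
  cases k with
  | zero => exact measurable_const
  | succ m =>
    exact ((measurable_const.mul (measurable_bspline _ _)).sub
      (measurable_const.mul (measurable_bspline _ _)))

lemma dsp_bound (k : ℕ) (ξ : Fin (k + 2) → ℝ) (hξ : StrictMono ξ) :
    ∃ M : ℝ, 0 ≤ M ∧ ∀ x : ℝ, |dsp k ξ x| ≤ M := by
  cases k with
  | zero => exact ⟨0, le_refl 0, fun x => by rw [show dsp 0 ξ x = 0 from rfl]; simp⟩
  | succ m =>
    obtain ⟨M1, hM1, hF⟩ := bspline_bound m _ (hξ.comp Fin.strictMono_castSucc)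
    obtain ⟨M2, hM2, hG⟩ := bspline_bound m _ (hξ.comp Fin.strictMono_succ)
    refine ⟨|(m + 1 : ℝ) / (ξ ⟨m + 1, by omega⟩ - ξ 0)| * M1
      + |(m + 1 : ℝ) / (ξ (Fin.last (m + 2)) - ξ 1)| * M2, by positivity, fun x => ?_⟩
    rw [dsp_succ_apply]
    refine (abs_sub _ _).trans ?_
    rw [abs_mul, abs_mul]
    exact add_le_add (mul_le_mul_of_nonneg_left (hF x) (abs_nonneg _))
      (mul_le_mul_of_nonneg_left (hG x) (abs_nonneg _))

lemma bspline_one_eq (ξ : Fin 3 → ℝ) (hξ : StrictMono ξ) :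
    bspline 1 ξ = fun x =>
      max 0 (min ((x - ξ 0) / (ξ 1 - ξ 0)) ((ξ 2 - x) / (ξ 2 - ξ 1))) := by
  have hd1 : (0:ℝ) < ξ 1 - ξ 0 := by
    have := hξ (show (0 : Fin 3) < 1 by decide); linarith
  have hd2 : (0:ℝ) < ξ 2 - ξ 1 := by
    have := hξ (show (1 : Fin 3) < 2 by decide); linarith
  funext x
  have e1 : (⟨0 + 1, by omega⟩ : Fin 3) = 1 := rfl
  have e2 : Fin.last 2 = (2 : Fin 3) := rfl
  have ecs0 : ((0 : Fin 2).castSucc) = (0 : Fin 3) := rfl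
  have ecs1 : ((1 : Fin 2).castSucc) = (1 : Fin 3) := rfl
  have es0 : ((0 : Fin 2).succ) = (1 : Fin 3) := rfl
  have es1 : ((1 : Fin 2).succ) = (2 : Fin 3) := rfl
  have hB : bspline 1 ξ x =
      (x - ξ 0) / (ξ 1 - ξ 0) * (if ξ 0 ≤ x ∧ x < ξ 1 then (1:ℝ) else 0)
      + (ξ 2 - x) / (ξ 2 - ξ 1) * (if ξ 1 ≤ x ∧ x < ξ 2 then (1:ℝ) else 0) := by
    rw [bspline_succ_apply]
    simp only [bspline, e1, e2, ecs0, ecs1, es0, es1]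
  rw [hB]
  set A := (x - ξ 0) / (ξ 1 - ξ 0) with hA
  set B := (ξ 2 - x) / (ξ 2 - ξ 1) with hBB
  rcases lt_or_ge x (ξ 0) with h0 | h0
  · rw [if_neg (by rintro ⟨h,-⟩; linarith), if_neg (by
      rintro ⟨h,-⟩
      have := hξ (show (0:Fin 3) < 1 by decide); linarith)]
    have hA0 : A < 0 := div_neg_of_neg_of_pos (by linarith) hd1
    have : min A B ≤ A := min_le_left _ _
    rw [max_eq_left (by linarith)]
    ring
  · rcases lt_or_ge x (ξ 1) with h1 | h1
    · rw [if_pos ⟨h0, h1⟩, if_neg (by rintro ⟨h,-⟩; linarith)]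
      have hAB : A ≤ B := by
        rw [hA, hBB, div_le_div_iff₀ hd1 hd2]; nlinarith
      have hA0 : 0 ≤ A := div_nonneg (by linarith) (le_of_lt hd1)
      rw [min_eq_left hAB, max_eq_right hA0]
      ring
    · rcases lt_or_ge x (ξ 2) with h2 | h2
      · rw [if_neg (by rintro ⟨-,h⟩; linarith), if_pos ⟨h1, h2⟩]
        have hBA : B ≤ A := by
          rw [hA, hBB, div_le_div_iff₀ hd2 hd1]; nlinarith
        have hB0 : 0 ≤ B := div_nonneg (by linarith) (le_of_lt hd2)
        rw [min_eq_right hBA, max_eq_right hB0]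
        ring
      · rw [if_neg (by rintro ⟨-,h⟩; linarith), if_neg (by rintro ⟨-,h⟩; linarith)]
        have hB0 : B ≤ 0 := div_nonpos_of_nonpos_of_nonneg (by linarith) (le_of_lt hd2)
        have : min A B ≤ B := min_le_right _ _
        rw [max_eq_left (by linarith)]
        ring

lemma continuous_bspline_succ : ∀ (k : ℕ) (ξ : Fin (k + 3) → ℝ), StrictMono ξ →
    Continuous (bspline (k + 1) ξ) := by
  intro k
  induction k with
  | zero =>
    intro ξ hξ
    rw [bspline_one_eq ξ hξ]
    exact continuous_const.max
      ((((continuous_id.sub continuous_const).div_const _)).min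
        ((continuous_const.sub continuous_id).div_const _))
  | succ m IH =>
    intro ξ hξ
    have : bspline (m + 2) ξ = fun x =>
        (x - ξ 0) / (ξ ⟨m + 2, by omega⟩ - ξ 0) * bspline (m+1) (fun i => ξ i.castSucc) x
        + (ξ (Fin.last (m + 3)) - x) / (ξ (Fin.last (m + 3)) - ξ 1) *
            bspline (m+1) (fun i => ξ i.succ) x := by
      funext x; exact bspline_succ_apply (m+1) ξ x
    rw [this]
    have hF := IH _ (hξ.comp Fin.strictMono_castSucc)
    have hG := IH _ (hξ.comp Fin.strictMono_succ)
    exact ((((continuous_id.sub continuous_const).div_const _)).mul hF).add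
      ((((continuous_const.sub continuous_id)).div_const _).mul hG)


set_option maxHeartbeats 1000000 in
lemma hasDerivAt_bspline : ∀ (k : ℕ) (ξ : Fin (k + 2) → ℝ), StrictMono ξ →
    ∀ x : ℝ, x ∉ Set.range ξ → HasDerivAt (bspline k ξ) (dsp k ξ x) x := by
  intro k
  induction k with
  | zero =>
    intro ξ hξ x hx
    have h0 : x ≠ ξ 0 := fun h => hx ⟨0, h.symm⟩
    have h1 : x ≠ ξ 1 := fun h => hx ⟨1, h.symm⟩
    have h01 : ξ 0 < ξ 1 := hξ (by decide)
    have hev : (fun _ => bspline 0 ξ x) =ᶠ[nhds x] bspline 0 ξ := by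
      rcases lt_or_gt_of_ne h0 with hlt | hgt
      · filter_upwards [eventually_lt_nhds hlt] with y hy
        simp only [bspline]
        rw [if_neg (by rintro ⟨h,-⟩; linarith), if_neg (by rintro ⟨h,-⟩; linarith)]
      · rcases lt_or_gt_of_ne h1 with hlt1 | hgt1
        · filter_upwards [eventually_gt_nhds hgt, eventually_lt_nhds hlt1] with y hy1 hy2
          simp only [bspline]
          rw [if_pos ⟨le_of_lt hgt, hlt1⟩, if_pos ⟨le_of_lt hy1, hy2⟩]
        · filter_upwards [eventually_gt_nhds hgt1] with y hy
          simp only [bspline]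
          rw [if_neg (by rintro ⟨-,h⟩; linarith), if_neg (by rintro ⟨-,h⟩; linarith)]
    have : HasDerivAt (fun _ => bspline 0 ξ x) (0:ℝ) x := hasDerivAt_const x _
    have h2 := this.congr_of_eventuallyEq hev.symm
    simpa [show dsp 0 ξ x = 0 from rfl] using h2
  | succ m IH =>
    intro ξ hξ x hx
    set F := bspline m (fun i => ξ i.castSucc) with hFdef
    set G := bspline m (fun i => ξ i.succ) with hGdef
    have hmF : StrictMono (fun i : Fin (m+2) => ξ i.castSucc) :=
      hξ.comp Fin.strictMono_castSucc
    have hmG : StrictMono (fun i : Fin (m+2) => ξ i.succ) :=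
      hξ.comp Fin.strictMono_succ
    have hxF : x ∉ Set.range (fun i : Fin (m+2) => ξ i.castSucc) := by
      rintro ⟨i, hi⟩; exact hx ⟨i.castSucc, hi⟩
    have hxG : x ∉ Set.range (fun i : Fin (m+2) => ξ i.succ) := by
      rintro ⟨i, hi⟩; exact hx ⟨i.succ, hi⟩
    have hF : HasDerivAt F (dsp m (fun i => ξ i.castSucc) x) x := IH _ hmF x hxF
    have hG : HasDerivAt G (dsp m (fun i => ξ i.succ) x) x := IH _ hmG x hxG
    have h_a : HasDerivAt (fun y => (y - ξ 0) / (ξ ⟨m + 1, by omega⟩ - ξ 0))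
        (1 / (ξ ⟨m + 1, by omega⟩ - ξ 0)) x :=
      ((hasDerivAt_id x).sub_const (ξ 0)).div_const _
    have h_b : HasDerivAt (fun y => (ξ (Fin.last (m + 2)) - y) / (ξ (Fin.last (m + 2)) - ξ 1))
        ((0 - 1) / (ξ (Fin.last (m + 2)) - ξ 1)) x :=
      ((hasDerivAt_const x _).sub (hasDerivAt_id x)).div_const _
    have key := (h_a.mul hF).add (h_b.mul hG)
    have hfun : bspline (m+1) ξ = fun y =>
        (y - ξ 0) / (ξ ⟨m + 1, by omega⟩ - ξ 0) * F y
        + (ξ (Fin.last (m + 2)) - y) / (ξ (Fin.last (m + 2)) - ξ 1) * G y :=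
      funext fun y => bspline_succ_apply m ξ y
    rw [hfun]
    refine key.congr_deriv ?_
    symm
    -- now the scalar identity
    have hd1 : ξ ⟨m + 1, by omega⟩ - ξ 0 ≠ 0 := by
      have := hξ (show (0 : Fin (m+3)) < ⟨m+1, by omega⟩ by simp [Fin.lt_def]); linarith
    have hd2 : ξ (Fin.last (m + 2)) - ξ 1 ≠ 0 := by
      have := hξ (show (1 : Fin (m+3)) < Fin.last (m+2) by simp [Fin.lt_def]); linarith
    cases m with
    | zero =>
      rw [show dsp 0 (fun i : Fin 2 => ξ i.castSucc) x = 0 from rfl,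
        show dsp 0 (fun i : Fin 2 => ξ i.succ) x = 0 from rfl,
        dsp_succ_apply]
      push_cast
      field_simp
      try ring
    | succ j =>
      -- unfold one more level
      have hmid : (fun i : Fin (j+2) => (fun i' : Fin (j+3) => ξ i'.castSucc) i.succ)
          = (fun i : Fin (j+2) => (fun i' : Fin (j+3) => ξ i'.succ) i.castSucc) := by
        rfl
      rw [dsp_succ_apply (j+1) ξ x, dsp_succ_apply j, dsp_succ_apply j,
        hFdef, hGdef, bspline_succ_apply j, bspline_succ_apply j, hmid]
      -- normalize all Fin indices
      have efin : ∀ (a b : Fin (j+4)), a.val = b.val → ξ a = ξ b := by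
        intro a b hab; rw [Fin.ext hab]
      have E1 : ξ (Fin.castSucc (0 : Fin (j+3))) = ξ (0 : Fin (j+4)) := efin _ _ (by simp)
      have E2 : ξ (Fin.castSucc (⟨j+1, by omega⟩ : Fin (j+3))) = ξ (⟨j+1, by omega⟩ : Fin (j+4)) :=
        efin _ _ (by simp)
      have E3 : ξ ((Fin.last (j+2)).castSucc) = ξ (⟨j+2, by omega⟩ : Fin (j+4)) := efin _ _ (by simp)
      have E4 : ξ (Fin.castSucc (1 : Fin (j+3))) = ξ (1 : Fin (j+4)) := efin _ _ (by simp)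
      have E5 : ξ (Fin.succ (0 : Fin (j+3))) = ξ (1 : Fin (j+4)) := efin _ _ (by simp)
      have E6 : ξ (Fin.succ (⟨j+1, by omega⟩ : Fin (j+3))) = ξ (⟨j+2, by omega⟩ : Fin (j+4)) :=
        efin _ _ (by simp)
      have E7 : ξ ((Fin.last (j+2)).succ) = ξ (Fin.last (j+3)) := efin _ _ (by simp)
      have E8 : ξ (Fin.succ (1 : Fin (j+3))) = ξ (⟨2, by omega⟩ : Fin (j+4)) := efin _ _ (by simp)
      have E9 : ξ (⟨j+1+1, by omega⟩ : Fin (j+4)) = ξ (⟨j+2, by omega⟩ : Fin (j+4)) :=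
        efin _ _ (by simp)
      rw [E9, E1, E2, E3, E4, E5, E6, E7, E8]
      have hne1 : ξ ⟨j+1, by omega⟩ - ξ 0 ≠ 0 := by
        have := hξ (show (0 : Fin (j+4)) < ⟨j+1, by omega⟩ by simp [Fin.lt_def]); linarith
      have hne2 : ξ ⟨j+2, by omega⟩ - ξ 1 ≠ 0 := by
        have := hξ (show (1 : Fin (j+4)) < ⟨j+2, by omega⟩ by
          simp only [Fin.lt_def, Fin.val_one]; omega); linarith
      have hne3 : ξ (Fin.last (j+3)) - ξ ⟨2, by omega⟩ ≠ 0 := by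
        have := hξ (show (⟨2, by omega⟩ : Fin (j+4)) < Fin.last (j+3) by
          simp only [Fin.lt_def, Fin.val_last]; omega); linarith
      have hne4 : ξ ⟨j+2, by omega⟩ - ξ 0 ≠ 0 := by
        have := hξ (show (0 : Fin (j+4)) < ⟨j+2, by omega⟩ by simp [Fin.lt_def]); linarith
      have hne5 : ξ (Fin.last (j+3)) - ξ 1 ≠ 0 := by
        have := hξ (show (1 : Fin (j+4)) < Fin.last (j+3) by
          simp only [Fin.lt_def, Fin.val_one, Fin.val_last]; omega); linarith
      push_cast
      field_simp
      ring


open intervalIntegral Polynomial in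
lemma finiteDiff_poly : ∀ (r : ℕ) (P : Polynomial ℝ), P.natDegree < r → ∀ (h x : ℝ),
    finiteDiff r h (fun y => P.eval y) x = 0 := by
  intro r
  induction r with
  | zero => intro P hP; exact absurd hP (Nat.not_lt_zero _)
  | succ r IH =>
    intro P hP h x
    rcases Nat.eq_zero_or_pos P.natDegree with h0 | hpos
    · obtain ⟨c, hc⟩ := Polynomial.natDegree_eq_zero.mp h0
      have hconst : (fun y => P.eval y) = fun _ => c := by
        funext y; rw [← hc, Polynomial.eval_C]
      rw [hconst, finiteDiff_succ']
      have hval : ∀ z : ℝ, finiteDiff r h (fun _ => c) z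
          = (∑ j ∈ Finset.range (r+1), (r.choose j : ℝ) * (-1:ℝ)^(r-j)) * c := by
        intro z; rw [finiteDiff, Finset.sum_mul]
      rw [hval, hval, sub_self]
    · rw [finiteDiff_succ]
      have hfd : fwdDiff h (fun y => P.eval y)
          = fun y => (Polynomial.taylor h P - P).eval y := by
        funext y
        rw [fwdDiff, Polynomial.eval_sub, Polynomial.taylor_eval]
      rw [hfd]
      set Q := Polynomial.taylor h P - P with hQdef
      rcases eq_or_ne Q 0 with hQ | hQ
      · rw [hQ]
        simp [finiteDiff]
      · apply IH
        have hdegle : Q.natDegree ≤ P.natDegree := by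
          refine le_trans (Polynomial.natDegree_sub_le _ _) ?_
          rw [Polynomial.natDegree_taylor]
          simp
        have hcoeff : Q.coeff P.natDegree = 0 := by
          rw [hQdef, Polynomial.coeff_sub, Polynomial.taylor_coeff]
          have h1 : (Polynomial.hasseDeriv P.natDegree P).natDegree = 0 :=
            le_antisymm (le_trans (Polynomial.natDegree_hasseDeriv_le _ _) (by omega))
              (Nat.zero_le _)
          rw [Polynomial.eq_C_of_natDegree_eq_zero h1, Polynomial.eval_C,
            Polynomial.hasseDeriv_coeff]
          simp
        have hne : Q.natDegree ≠ P.natDegree := by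
          intro heq
          apply hQ
          rw [← Polynomial.leadingCoeff_eq_zero, Polynomial.leadingCoeff, heq]
          exact hcoeff
        omega

lemma bspline_eq_polynomial_on : ∀ (k : ℕ) (ξ : Fin (k + 2) → ℝ) (a b : ℝ),
    (∀ i, ξ i ∉ Set.Icc a b) →
    ∃ P : Polynomial ℝ, P.natDegree ≤ k ∧ ∀ x ∈ Set.Icc a b, bspline k ξ x = P.eval x := by
  intro k
  induction k with
  | zero =>
    intro ξ a b hk
    have h0 := hk 0
    have h1 := hk 1
    rw [Set.mem_Icc, not_and_or, not_le, not_le] at h0 h1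
    rcases h0 with h0 | h0
    · rcases h1 with h1 | h1
      · refine ⟨0, by simp, fun x hx => ?_⟩
        simp only [bspline]
        rw [if_neg (by rintro ⟨-, hc⟩; rcases hx with ⟨hxa, -⟩; linarith), Polynomial.eval_zero]
      · refine ⟨Polynomial.C 1, by simp, fun x hx => ?_⟩
        simp only [bspline]
        rcases hx with ⟨hxa, hxb⟩
        rw [if_pos ⟨by linarith, by linarith⟩, Polynomial.eval_C]
    · refine ⟨0, by simp, fun x hx => ?_⟩
      simp only [bspline]
      rw [if_neg (by rintro ⟨hc, -⟩; rcases hx with ⟨-, hxb⟩; linarith), Polynomial.eval_zero]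
  | succ m IH =>
    intro ξ a b hk
    obtain ⟨PF, hPFdeg, hPF⟩ := IH (fun i => ξ i.castSucc) a b (fun i => hk i.castSucc)
    obtain ⟨PG, hPGdeg, hPG⟩ := IH (fun i => ξ i.succ) a b (fun i => hk i.succ)
    refine ⟨Polynomial.C (ξ ⟨m + 1, by omega⟩ - ξ 0)⁻¹ * (Polynomial.X - Polynomial.C (ξ 0)) * PF
      + Polynomial.C (ξ (Fin.last (m + 2)) - ξ 1)⁻¹ *
          (Polynomial.C (ξ (Fin.last (m + 2))) - Polynomial.X) * PG, ?_, ?_⟩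
    · have hdeg1 : (Polynomial.C (ξ ⟨m + 1, by omega⟩ - ξ 0)⁻¹ *
          (Polynomial.X - Polynomial.C (ξ 0)) * PF).natDegree ≤ m + 1 := by
        calc (Polynomial.C (ξ ⟨m + 1, by omega⟩ - ξ 0)⁻¹ *
            (Polynomial.X - Polynomial.C (ξ 0)) * PF).natDegree
            ≤ (Polynomial.C (ξ ⟨m + 1, by omega⟩ - ξ 0)⁻¹ *
              (Polynomial.X - Polynomial.C (ξ 0))).natDegree + PF.natDegree :=
              Polynomial.natDegree_mul_le
          _ ≤ 1 + m := add_le_add (le_trans (Polynomial.natDegree_C_mul_le _ _)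
              (le_of_eq (Polynomial.natDegree_X_sub_C _))) hPFdeg
          _ ≤ m + 1 := by omega
      have hdeg2 : (Polynomial.C (ξ (Fin.last (m + 2)) - ξ 1)⁻¹ *
          (Polynomial.C (ξ (Fin.last (m + 2))) - Polynomial.X) * PG).natDegree ≤ m + 1 := by
        calc (Polynomial.C (ξ (Fin.last (m + 2)) - ξ 1)⁻¹ *
            (Polynomial.C (ξ (Fin.last (m + 2))) - Polynomial.X) * PG).natDegree
            ≤ (Polynomial.C (ξ (Fin.last (m + 2)) - ξ 1)⁻¹ *
              (Polynomial.C (ξ (Fin.last (m + 2))) - Polynomial.X)).natDegree + PG.natDegree :=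
              Polynomial.natDegree_mul_le
          _ ≤ 1 + m := by
              refine add_le_add (le_trans (Polynomial.natDegree_C_mul_le _ _) ?_) hPGdeg
              refine le_trans (Polynomial.natDegree_sub_le _ _) ?_
              rw [Polynomial.natDegree_C, Polynomial.natDegree_X]
              omega
          _ ≤ m + 1 := by omega
      exact le_trans (Polynomial.natDegree_add_le _ _) (max_le hdeg1 hdeg2)
    · intro x hx
      rw [bspline_succ_apply, hPF x hx, hPG x hx]
      simp only [Polynomial.eval_add, Polynomial.eval_mul, Polynomial.eval_sub,
        Polynomial.eval_C, Polynomial.eval_X]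
      ring

lemma intervalIntegrable_of_bounded {g : ℝ → ℝ} {M a b : ℝ} (hg : Measurable g)
    (hM : ∀ x, |g x| ≤ M) : IntervalIntegrable g volume a b := by
  rw [intervalIntegrable_iff]
  refine Integrable.mono' (integrableOn_const (C := M) (ne_of_lt ?_))
    hg.aestronglyMeasurable.restrict (ae_of_all _ fun x => by
      simpa [Real.norm_eq_abs] using hM x)
  exact measure_Ioc_lt_top

open intervalIntegral in
lemma ftc_aux (f g : ℝ → ℝ) (s : Finset ℝ) (hf : Continuous f) (hg : Measurable g) (M : ℝ)
    (hM : ∀ x, |g x| ≤ M) (hd : ∀ x ∉ s, HasDerivAt f (g x) x) :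
    ∀ (n : ℕ) (a b : ℝ), a ≤ b → (s.filter fun c => a < c ∧ c < b).card ≤ n →
      ∫ t in a..b, g t = f b - f a := by
  intro n
  induction n with
  | zero =>
    intro a b hab hcard
    have hempty : (s.filter fun c => a < c ∧ c < b) = ∅ := Finset.card_eq_zero.mp
      (Nat.le_zero.mp hcard)
    refine integral_eq_sub_of_hasDerivAt_of_le hab hf.continuousOn (fun x hx => hd x fun hxs => ?_)
      (intervalIntegrable_of_bounded hg hM)
    have : x ∈ s.filter fun c => a < c ∧ c < b := Finset.mem_filter.mpr ⟨hxs, hx.1, hx.2⟩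
    rw [hempty] at this
    exact absurd this (Finset.notMem_empty x)
  | succ n IH =>
    intro a b hab hcard
    by_cases hne : (s.filter fun c => a < c ∧ c < b).Nonempty
    · obtain ⟨c, hc⟩ := hne
      obtain ⟨hcs, hac, hcb⟩ := Finset.mem_filter.mp hc
      have hsub1 : (s.filter fun d => a < d ∧ d < c)
          ⊆ (s.filter fun d => a < d ∧ d < b).erase c := by
        intro d hd
        obtain ⟨hds, had, hdc⟩ := Finset.mem_filter.mp hd
        exact Finset.mem_erase.mpr ⟨ne_of_lt hdc, Finset.mem_filter.mpr ⟨hds, had, by linarith⟩⟩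
      have hsub2 : (s.filter fun d => c < d ∧ d < b)
          ⊆ (s.filter fun d => a < d ∧ d < b).erase c := by
        intro d hd
        obtain ⟨hds, hcd, hdb⟩ := Finset.mem_filter.mp hd
        exact Finset.mem_erase.mpr ⟨(ne_of_lt hcd).symm,
          Finset.mem_filter.mpr ⟨hds, by linarith, hdb⟩⟩
      have hcarde : ((s.filter fun d => a < d ∧ d < b).erase c).card ≤ n := by
        have := Finset.card_erase_of_mem hc
        omega
      have h1 : ∫ t in a..c, g t = f c - f a :=
        IH a c (le_of_lt hac) (le_trans (Finset.card_le_card hsub1) hcarde)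
      have h2 : ∫ t in c..b, g t = f b - f c :=
        IH c b (le_of_lt hcb) (le_trans (Finset.card_le_card hsub2) hcarde)
      rw [← integral_add_adjacent_intervals (intervalIntegrable_of_bounded hg hM)
        (intervalIntegrable_of_bounded hg hM : IntervalIntegrable g volume c b), h1, h2]
      ring
    · rw [Finset.not_nonempty_iff_eq_empty] at hne
      refine integral_eq_sub_of_hasDerivAt_of_le hab hf.continuousOn
        (fun x hx => hd x fun hxs => ?_) (intervalIntegrable_of_bounded hg hM)
      have : x ∈ s.filter fun c => a < c ∧ c < b := Finset.mem_filter.mpr ⟨hxs, hx.1, hx.2⟩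
      rw [hne] at this
      exact absurd this (Finset.notMem_empty x)

open intervalIntegral in
lemma bspline_sub_integral (k : ℕ) (ξ : Fin (k + 3) → ℝ) (hξ : StrictMono ξ)
    (a b : ℝ) (hab : a ≤ b) :
    ∫ t in a..b, dsp (k+1) ξ t = bspline (k+1) ξ b - bspline (k+1) ξ a := by
  obtain ⟨M, hM0, hM⟩ := dsp_bound (k+1) ξ hξ
  refine ftc_aux (bspline (k+1) ξ) (dsp (k+1) ξ) (Finset.image ξ Finset.univ)
    (continuous_bspline_succ k ξ hξ) (measurable_dsp _ _) M hM (fun x hx => ?_)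
    _ a b hab le_rfl
  refine hasDerivAt_bspline (k+1) ξ hξ x (fun ⟨i, hi⟩ => hx ?_)
  exact Finset.mem_image.mpr ⟨i, Finset.mem_univ i, hi⟩


open intervalIntegral in
lemma bspline_finiteDiff_bound : ∀ (k : ℕ) (ξ : Fin (k + 2) → ℝ), StrictMono ξ →
    ∃ C : ℝ, 0 ≤ C ∧ ∀ r : ℕ, r ≤ k → ∀ h : ℝ, 0 < h → ∀ x : ℝ,
      |finiteDiff r h (bspline k ξ) x| ≤ C * h ^ r := by
  intro k
  induction k with
  | zero =>
    intro ξ hξ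
    refine ⟨1, zero_le_one, fun r hr h hh x => ?_⟩
    interval_cases r
    rw [finiteDiff_zero, pow_zero, mul_one]
    simp only [bspline]
    split <;> simp
  | succ m IH =>
    intro ξ hξ
    have hmF : StrictMono (fun i : Fin (m+2) => ξ i.castSucc) :=
      hξ.comp Fin.strictMono_castSucc
    have hmG : StrictMono (fun i : Fin (m+2) => ξ i.succ) :=
      hξ.comp Fin.strictMono_succ
    obtain ⟨CF, hCF0, hCF⟩ := IH _ hmF
    obtain ⟨CG, hCG0, hCG⟩ := IH _ hmG
    obtain ⟨M, hM0, hM⟩ := bspline_bound (m+1) ξ hξ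
    obtain ⟨Mg, hMg0, hMg⟩ := dsp_bound (m+1) ξ hξ
    set c1 := ((m + 1 : ℝ) / (ξ ⟨m + 1, by omega⟩ - ξ 0)) with hc1
    set c2 := ((m + 1 : ℝ) / (ξ (Fin.last (m + 2)) - ξ 1)) with hc2
    set D := |c1| * CF + |c2| * CG with hD
    have hD0 : 0 ≤ D := by positivity
    refine ⟨max M D, le_trans hM0 (le_max_left _ _), fun r hr h hh x => ?_⟩
    cases r with
    | zero =>
      rw [finiteDiff_zero, pow_zero, mul_one]
      exact le_trans (hM x) (le_max_left _ _)
    | succ r' =>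
      have hr' : r' ≤ m := by omega
      set g := dsp (m+1) ξ with hg
      -- step 1: the difference of the spline is an integral of g
      have key1 : fwdDiff h (bspline (m+1) ξ) = fun y => ∫ t in y..(y+h), g t := by
        funext y
        rw [fwdDiff, bspline_sub_integral m ξ hξ y (y+h) (by linarith)]
      -- step 2: bound on finiteDiff of g
      have hGbound : ∀ y : ℝ, |finiteDiff r' h g y| ≤ D * h ^ r' := by
        intro y
        have hgsplit : g = fun z => c1 * bspline m (fun i => ξ i.castSucc) z
            + (-c2) * bspline m (fun i => ξ i.succ) z := by
          funext z
          rw [hg, dsp_succ_apply]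
          ring
        rw [hgsplit, finiteDiff_linear]
        refine le_trans (abs_add_le _ _) ?_
        rw [abs_mul, abs_mul, abs_neg]
        calc |c1| * |finiteDiff r' h (bspline m fun i => ξ i.castSucc) y|
              + |c2| * |finiteDiff r' h (bspline m fun i => ξ i.succ) y|
            ≤ |c1| * (CF * h ^ r') + |c2| * (CG * h ^ r') := by
              exact add_le_add
                (mul_le_mul_of_nonneg_left (hCF r' hr' h hh y) (abs_nonneg _))
                (mul_le_mul_of_nonneg_left (hCG r' hr' h hh y) (abs_nonneg _))
          _ = D * h ^ r' := by rw [hD]; ring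
      -- step 3: swap finiteDiff with the integral
      have hgm : Measurable g := measurable_dsp _ _
      have swap : finiteDiff r' h (fun y => ∫ t in y..(y+h), g t) x
          = ∫ s in (0:ℝ)..h, finiteDiff r' h g (x + s) := by
        have hint : ∀ j : ℕ, IntervalIntegrable (fun s => g (x + s + j * h)) volume 0 h := by
          intro j
          exact intervalIntegrable_of_bounded (hgm.comp (by fun_prop)) (fun z => hMg _)
        have step : ∫ s in (0:ℝ)..h, finiteDiff r' h g (x + s)
            = ∑ j ∈ Finset.range (r' + 1), ∫ s in (0:ℝ)..h,
                (r'.choose j : ℝ) * (-1:ℝ)^(r'-j) * g (x + s + j * h) := by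
          rw [← intervalIntegral.integral_finset_sum]
          · apply integral_congr
            intro s hs
            simp only [finiteDiff]
          · intro j hj
            exact (hint j).const_mul _
        rw [step]
        simp only [finiteDiff]
        refine Finset.sum_congr rfl fun j hj => ?_
        rw [intervalIntegral.integral_const_mul]
        congr 1
        have harg : (fun s => g (x + s + j * h)) = fun s => g (s + (x + j * h)) := by
          funext s; congr 1; ring
        calc (fun y => ∫ t in y..(y+h), g t) (x + j * h)
            = ∫ t in (x + j * h)..(x + j * h + h), g t := rfl
          _ = ∫ s in (0:ℝ)..h, g (s + (x + j * h)) := by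
              rw [integral_comp_add_right g (x + j * h)]
              congr 1 <;> ring
          _ = ∫ s in (0:ℝ)..h, g (x + s + j * h) := by rw [harg]
      -- step 4: conclude
      rw [finiteDiff_succ, key1, swap]
      have hb : |∫ s in (0:ℝ)..h, finiteDiff r' h g (x + s)| ≤ (D * h ^ r') * |h - 0| := by
        have := intervalIntegral.norm_integral_le_of_norm_le_const
          (C := D * h ^ r') (f := fun s => finiteDiff r' h g (x + s)) (a := 0) (b := h)
          (fun s hs => by simpa [Real.norm_eq_abs] using hGbound (x + s))
        simpa [Real.norm_eq_abs] using this
      calc |∫ s in (0:ℝ)..h, finiteDiff r' h g (x + s)| ≤ (D * h ^ r') * |h - 0| := hb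
        _ = D * h ^ (r' + 1) := by
            rw [sub_zero, abs_of_pos hh]
            ring
        _ ≤ max M D * h ^ (r' + 1) := by
            have := le_max_right M D
            have hpow : (0:ℝ) ≤ h ^ (r' + 1) := by positivity
            nlinarith
lemma finiteDiff_top_vanish (k : ℕ) (ξ : Fin (k + 2) → ℝ) (h : ℝ) (hh : 0 < h) (x : ℝ)
    (hknot : ∀ i, ξ i ∉ Set.Icc x (x + (k+1) * h)) :
    finiteDiff (k+1) h (bspline k ξ) x = 0 := by
  obtain ⟨P, hPdeg, hP⟩ := bspline_eq_polynomial_on k ξ x (x + (k+1) * h) hknot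
  rw [finiteDiff_congr (g := fun y => P.eval y) fun j hj => ?_]
  · exact finiteDiff_poly (k+1) P (by omega) h x
  · apply hP
    constructor
    · have : (0:ℝ) ≤ j * h := by positivity
      linarith
    · have hjk : (j : ℝ) ≤ (k:ℝ) + 1 := by exact_mod_cast hj
      have : (j:ℝ) * h ≤ ((k:ℝ)+1) * h := mul_le_mul_of_nonneg_right hjk hh.le
      linarith


lemma measurable_finiteDiff (r : ℕ) (h : ℝ) {f : ℝ → ℝ} (hf : Measurable f) :
    Measurable (fun x => finiteDiff r h f x) := by
  unfold finiteDiff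
  apply Finset.measurable_sum
  intro j hj
  exact measurable_const.mul (hf.comp (by fun_prop))

lemma finiteDiff_const_mul (r : ℕ) (h c : ℝ) (f : ℝ → ℝ) (x : ℝ) :
    finiteDiff r h (fun y => c * f y) x = c * finiteDiff r h f x := by
  unfold finiteDiff
  rw [Finset.mul_sum]
  exact Finset.sum_congr rfl fun j hj => by ring

lemma finiteDiff_sum {ι : Type*} (s : Finset ι) (F : ι → ℝ → ℝ) (r : ℕ) (h x : ℝ) :
    finiteDiff r h (fun y => ∑ i ∈ s, F i y) x = ∑ i ∈ s, finiteDiff r h (F i) x := by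
  unfold finiteDiff
  calc ∑ j ∈ Finset.range (r+1), (r.choose j : ℝ) * (-1:ℝ)^(r-j) * ∑ i ∈ s, F i (x + j*h)
      = ∑ j ∈ Finset.range (r+1), ∑ i ∈ s,
          (r.choose j : ℝ) * (-1:ℝ)^(r-j) * F i (x + j*h) :=
        Finset.sum_congr rfl fun j _ => Finset.mul_sum _ _ _
    _ = ∑ i ∈ s, ∑ j ∈ Finset.range (r+1),
          (r.choose j : ℝ) * (-1:ℝ)^(r-j) * F i (x + j*h) := Finset.sum_comm

lemma integral_rpow_eq_toReal {g : ℝ → ℝ} (hg : Measurable g) {M : ℝ} (hM : ∀ x, |g x| ≤ M)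
    {p : ℝ} (hp : 1 ≤ p) (s : Set ℝ) (hvs : volume s ≤ 1) :
    (∫ x in s, |g x| ^ p) ^ (1/p)
      = (eLpNorm g (ENNReal.ofReal p) (volume.restrict s)).toReal := by
  have hp0 : 0 < p := lt_of_lt_of_le one_pos hp
  have hfin : IsFiniteMeasure (volume.restrict s) :=
    ⟨by rw [Measure.restrict_apply_univ]; exact lt_of_le_of_lt hvs ENNReal.one_lt_top⟩
  have hne : (ENNReal.ofReal p) ≠ 0 := by
    simp only [ne_eq, ENNReal.ofReal_eq_zero, not_le]; linarith
  have hmem : MemLp g (ENNReal.ofReal p) (volume.restrict s) :=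
    MemLp.of_bound hg.aestronglyMeasurable.restrict M
      (ae_of_all _ fun x => by simpa [Real.norm_eq_abs] using hM x)
  rw [hmem.eLpNorm_eq_integral_rpow_norm hne ENNReal.ofReal_ne_top]
  have hint_nonneg : 0 ≤ ∫ a, ‖g a‖ ^ (ENNReal.ofReal p).toReal ∂(volume.restrict s) :=
    integral_nonneg fun a => Real.rpow_nonneg (norm_nonneg _) _
  rw [ENNReal.toReal_ofReal (Real.rpow_nonneg hint_nonneg _)]
  rw [ENNReal.toReal_ofReal hp0.le]
  simp only [Real.norm_eq_abs, one_div]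

lemma modSmooth_nonneg (p : ℝ) (r : ℕ) (f : ℝ → ℝ) (t : ℝ) : 0 ≤ modSmooth p r f t := by
  apply Real.sSup_nonneg
  rintro y ⟨h, hh, rfl⟩
  exact Real.rpow_nonneg (integral_nonneg fun x => Real.rpow_nonneg (abs_nonneg _) _) _

lemma modSmooth_le {p : ℝ} (hp : 1 ≤ p) (r : ℕ) (f : ℝ → ℝ) {t B : ℝ} (hB : 0 ≤ B)
    (hbound : ∀ h : ℝ, 0 < h → h ≤ t → 0 < 1 - r * h →
      (∫ x in Set.Ioo (0:ℝ) (1 - r * h), |finiteDiff r h f x| ^ p) ^ (1/p) ≤ B) :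
    modSmooth p r f t ≤ B := by
  apply Real.sSup_le _ hB
  rintro y ⟨h, hh, rfl⟩
  simp only []
  rcases le_or_gt (1 - r * h) 0 with hneg | hpos
  · rw [Set.Ioo_eq_empty (not_lt.mpr hneg), Measure.restrict_empty, integral_zero_measure,
      Real.zero_rpow (one_div_ne_zero (by linarith))]
    exact hB
  · exact hbound h hh.1 hh.2 hpos


lemma single_bound (k : ℕ) (ξ : Fin (k+2) → ℝ) (hξ : StrictMono ξ) {p γ : ℝ} (hp : 1 ≤ p)
    {r : ℕ} (hr1 : 1 ≤ r) (hrk : r ≤ k + 1) (hγr : γ ≤ (r:ℝ)) (hγk : γ ≤ (k:ℝ) + 1/p) :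
    ∃ C : ℝ, 0 ≤ C ∧ ∀ h : ℝ, 0 < h → h ≤ 1 → ∀ s : Set ℝ, volume s ≤ 1 →
      eLpNorm (fun x => finiteDiff r h (bspline k ξ) x) (ENNReal.ofReal p)
        (volume.restrict s) ≤ ENNReal.ofReal (C * h ^ γ) := by
  obtain ⟨C, hC0, hC⟩ := bspline_finiteDiff_bound k ξ hξ
  have hp0 : 0 < p := lt_of_lt_of_le one_pos hp
  have hp'0 : (ENNReal.ofReal p) ≠ 0 := by
    simp only [ne_eq, ENNReal.ofReal_eq_zero, not_le]; linarith
  have hp'top : (ENNReal.ofReal p) ≠ ⊤ := ENNReal.ofReal_ne_top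
  rcases le_or_gt r k with hcase | hcase
  · -- r ≤ k : uniform pointwise bound C * h^r ≤ C * h^γ
    refine ⟨C, hC0, fun h hh h1 s hvs => ?_⟩
    have hpt : ∀ᵐ x ∂(volume.restrict s), ‖finiteDiff r h (bspline k ξ) x‖ ≤ C * h ^ γ := by
      refine ae_of_all _ fun x => ?_
      rw [Real.norm_eq_abs]
      refine le_trans (hC r hcase h hh x) ?_
      have hrg : h ^ (r:ℝ) ≤ h ^ γ := Real.rpow_le_rpow_of_exponent_ge hh h1 hγr
      rw [← Real.rpow_natCast h r]
      exact mul_le_mul_of_nonneg_left hrg hC0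
    refine le_trans (eLpNorm_le_of_ae_bound hpt) ?_
    have h1le : (volume.restrict s) Set.univ ^ (ENNReal.ofReal p).toReal⁻¹ ≤ 1 := by
      refine ENNReal.rpow_le_one ?_ (by positivity)
      rw [Measure.restrict_apply_univ]; exact hvs
    calc (volume.restrict s) Set.univ ^ (ENNReal.ofReal p).toReal⁻¹
          * ENNReal.ofReal (C * h ^ γ)
        ≤ 1 * ENNReal.ofReal (C * h ^ γ) := mul_le_mul_left h1le _
      _ = ENNReal.ofReal (C * h ^ γ) := one_mul _
  · -- r = k + 1 : indicator bound
    have hrk1 : r = k + 1 := by omega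
    subst hrk1
    refine ⟨2 * C * (((k:ℝ)+2) * ((k:ℝ)+1)) ^ (1/p), by positivity, fun h hh h1 s hvs => ?_⟩
    set E := ⋃ i : Fin (k+2), Set.Icc (ξ i - ((k:ℝ)+1) * h) (ξ i) with hE
    have hEmeas : MeasurableSet E := MeasurableSet.iUnion fun i => measurableSet_Icc
    have hc0 : (0:ℝ) ≤ 2 * C * h ^ k := by positivity
    have hpt : ∀ x, ‖finiteDiff (k+1) h (bspline k ξ) x‖
        ≤ ‖E.indicator (fun _ => 2 * C * h ^ k) x‖ := by
      intro x
      by_cases hxE : x ∈ E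
      · rw [Set.indicator_of_mem hxE, Real.norm_eq_abs, Real.norm_eq_abs,
          abs_of_nonneg hc0, finiteDiff_succ']
        have b1 := hC k le_rfl h hh (x + h)
        have b2 := hC k le_rfl h hh x
        calc |finiteDiff k h (bspline k ξ) (x + h) - finiteDiff k h (bspline k ξ) x|
            ≤ |finiteDiff k h (bspline k ξ) (x + h)| + |finiteDiff k h (bspline k ξ) x| :=
              abs_sub _ _
          _ ≤ 2 * C * h ^ k := by linarith
      · have hvan : finiteDiff (k+1) h (bspline k ξ) x = 0 := by
          refine finiteDiff_top_vanish k ξ h hh x fun i hi => ?_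
          rw [Set.mem_Icc] at hi
          refine hxE ?_
          rw [hE]
          refine Set.mem_iUnion.mpr ⟨i, Set.mem_Icc.mpr ⟨?_, hi.1⟩⟩
          linarith [hi.2]
        rw [Set.indicator_of_notMem hxE, hvan, norm_zero]
    refine le_trans (eLpNorm_mono hpt) ?_
    rw [eLpNorm_indicator_const hEmeas hp'0 hp'top]
    have hμE : (volume.restrict s) E ≤ ENNReal.ofReal ((((k:ℝ)+2) * ((k:ℝ)+1)) * h) := by
      have h1' : (volume.restrict s) E ≤ volume E := by
        rw [Measure.restrict_apply hEmeas]
        exact measure_mono Set.inter_subset_left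
      refine le_trans h1' (le_trans (measure_iUnion_fintype_le _ _) (le_of_eq ?_))
      have hvol : ∀ i : Fin (k+2), volume (Set.Icc (ξ i - ((k:ℝ)+1) * h) (ξ i))
          = ENNReal.ofReal (((k:ℝ)+1) * h) := by
        intro i
        rw [Real.volume_Icc]
        congr 1
        ring
      calc ∑ i : Fin (k+2), volume (Set.Icc (ξ i - ((k:ℝ)+1) * h) (ξ i))
          = ((k+2 : ℕ) : ℝ≥0∞) * ENNReal.ofReal (((k:ℝ)+1) * h) := by
            rw [Finset.sum_congr rfl fun i _ => hvol i, Finset.sum_const, Finset.card_univ,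
              Fintype.card_fin, nsmul_eq_mul]
        _ = ENNReal.ofReal ((((k:ℝ)+2) * ((k:ℝ)+1)) * h) := by
            rw [← ENNReal.ofReal_natCast (k+2), ← ENNReal.ofReal_mul (by positivity)]
            congr 1
            push_cast
            ring
    have htoReal : (ENNReal.ofReal p).toReal = p := ENNReal.toReal_ofReal hp0.le
    calc (‖(2 * C * h ^ k : ℝ)‖₊ : ℝ≥0∞) * (volume.restrict s) E ^ (1 / (ENNReal.ofReal p).toReal)
        ≤ ENNReal.ofReal (2 * C * h ^ k)
          * ENNReal.ofReal (((((k:ℝ)+2) * ((k:ℝ)+1)) * h) ^ (1/p)) := by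
          refine mul_le_mul' ?_ ?_
          · rw [← enorm_eq_nnnorm, ← ofReal_norm, Real.norm_eq_abs, abs_of_nonneg hc0]
          · rw [htoReal, ← ENNReal.ofReal_rpow_of_nonneg (by positivity) (by positivity)]
            exact ENNReal.rpow_le_rpow hμE (by positivity)
      _ = ENNReal.ofReal ((2 * C * h ^ k) * ((((k:ℝ)+2) * ((k:ℝ)+1)) * h) ^ (1/p)) :=
          (ENNReal.ofReal_mul hc0).symm
      _ ≤ ENNReal.ofReal ((2 * C * (((k:ℝ)+2) * ((k:ℝ)+1)) ^ (1/p)) * h ^ γ) := by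
          apply ENNReal.ofReal_le_ofReal
          rw [Real.mul_rpow (by positivity) hh.le]
          have hsteps : h ^ (k:ℝ) * h ^ (1/p) = h ^ ((k:ℝ) + 1/p) := (Real.rpow_add hh _ _).symm
          have hfin : h ^ ((k:ℝ) + 1/p) ≤ h ^ γ :=
            Real.rpow_le_rpow_of_exponent_ge hh h1 hγk
          calc 2 * C * h ^ k * ((((k:ℝ)+2) * ((k:ℝ)+1)) ^ (1/p) * h ^ (1/p))
              = 2 * C * (((k:ℝ)+2) * ((k:ℝ)+1)) ^ (1/p) * (h ^ (k:ℝ) * h ^ (1/p)) := by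
                rw [← Real.rpow_natCast h k]
                ring
            _ = 2 * C * (((k:ℝ)+2) * ((k:ℝ)+1)) ^ (1/p) * h ^ ((k:ℝ) + 1/p) := by rw [hsteps]
            _ ≤ 2 * C * (((k:ℝ)+2) * ((k:ℝ)+1)) ^ (1/p) * h ^ γ := by
                refine mul_le_mul_of_nonneg_left hfin (by positivity)

end BesovAux

open BesovAux

/-- deterministic content of Theorem 2 of the paper: a finite linear
combination of B-spline basis functions of degrees `k ∈ S` with strictly increasing
knot vectors in `[0,1]` belongs to `B^α_{p,q}([0,1])` whenever
`0 < α < min S + 1/p`. -/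
theorem labs_mean_mem_besov (S : Finset ℕ) (hS : S.Nonempty)
    (J : ℕ → ℕ) (β : (k : ℕ) → Fin (J k) → ℝ)
    (ξ : (k : ℕ) → Fin (J k) → Fin (k + 2) → ℝ)
    (hξ : ∀ k ∈ S, ∀ l, StrictMono (ξ k l))
    (hξ0 : ∀ k ∈ S, ∀ l, 0 ≤ ξ k l 0)
    (hξ1 : ∀ k ∈ S, ∀ l, ξ k l (Fin.last (k + 1)) ≤ 1)
    (p q α : ℝ) (hp : 1 ≤ p) (hq : 1 ≤ q) (hα : 0 < α)
    (hαmin : α < S.min' hS + 1 / p) :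
    memBesov p q α (fun x => ∑ k ∈ S, ∑ l, β k l * bspline k (ξ k l) x) := by
  classical
  set r := besovR α with hrdef
  set m := S.min' hS with hmdef
  set f : ℝ → ℝ := fun x => ∑ k ∈ S, ∑ l, β k l * bspline k (ξ k l) x with hfdef
  have hp0 : 0 < p := lt_of_lt_of_le one_pos hp
  have hq0 : 0 < q := lt_of_lt_of_le one_pos hq
  have hr1 : 1 ≤ r := Nat.succ_le_succ (Nat.zero_le _)
  have hrcast : (r : ℝ) = (⌊α⌋₊ : ℝ) + 1 := by rw [hrdef, besovR]; push_cast; ring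
  have hαr : α < (r : ℝ) := by rw [hrcast]; exact Nat.lt_floor_add_one α
  have h1p_pos : 0 < 1 / p := by positivity
  have h1p_le1 : 1 / p ≤ 1 := by rw [div_le_one hp0]; exact hp
  set γ := min (r : ℝ) ((m : ℝ) + 1 / p) with hγdef
  have hγα : α < γ := lt_min hαr hαmin
  have hγ0 : 0 < γ := lt_trans hα hγα
  have hγr : γ ≤ (r : ℝ) := min_le_left _ _
  have hkfacts : ∀ k ∈ S, r ≤ k + 1 ∧ γ ≤ (k : ℝ) + 1 / p := by
    intro k hk
    have hmk : m ≤ k := S.min'_le k hk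
    have hmkr : (m : ℝ) ≤ (k : ℝ) := Nat.cast_le.mpr hmk
    constructor
    · have hfl : ⌊α⌋₊ < k + 1 := by
        rw [Nat.floor_lt hα.le]
        push_cast
        linarith
      rw [hrdef, besovR]
      omega
    · exact le_trans (min_le_right _ _) (by linarith)
  have hfmeas : Measurable f :=
    Finset.measurable_sum S fun k _ => Finset.measurable_sum Finset.univ
      fun l _ => measurable_const.mul (measurable_bspline k (ξ k l))
  -- boundedness
  have hMex : ∃ Mf : ℝ, 0 ≤ Mf ∧ ∀ x, |f x| ≤ Mf := by
    have hterm : ∀ k ∈ S, ∃ Mk : ℝ, 0 ≤ Mk ∧ ∀ x,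
        |∑ l, β k l * bspline k (ξ k l) x| ≤ Mk := by
      intro k hk
      have hl : ∀ l : Fin (J k), ∃ Ml, 0 ≤ Ml ∧ ∀ x,
          |β k l * bspline k (ξ k l) x| ≤ Ml := fun l => by
        obtain ⟨M, hM0, hM⟩ := bspline_bound k (ξ k l) (hξ k hk l)
        exact ⟨|β k l| * M, by positivity, fun x => by
          rw [abs_mul]; exact mul_le_mul_of_nonneg_left (hM x) (abs_nonneg _)⟩
      choose Ml hMl0 hMl using hl
      refine ⟨∑ l, Ml l, Finset.sum_nonneg fun l _ => hMl0 l, fun x =>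
        le_trans (Finset.abs_sum_le_sum_abs _ _) (Finset.sum_le_sum fun l _ => hMl l x)⟩
    choose! Mk hMk0 hMk using hterm
    exact ⟨∑ k ∈ S, Mk k, Finset.sum_nonneg fun k hk => hMk0 k hk, fun x =>
      le_trans (Finset.abs_sum_le_sum_abs _ _) (Finset.sum_le_sum fun k hk => hMk k hk x)⟩
  obtain ⟨Mf, hMf0, hMf⟩ := hMex
  have hp'0 : (ENNReal.ofReal p) ≠ 0 := by
    simp only [ne_eq, ENNReal.ofReal_eq_zero, not_le]; linarith
  -- KEY eLpNorm bound
  have key : ∃ Ct : ℝ, 0 ≤ Ct ∧ ∀ h : ℝ, 0 < h → h ≤ 1 → ∀ s : Set ℝ, volume s ≤ 1 →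
      eLpNorm (fun x => finiteDiff r h f x) (ENNReal.ofReal p) (volume.restrict s)
        ≤ ENNReal.ofReal (Ct * h ^ γ) := by
    have hex : ∀ k ∈ S, ∀ l : Fin (J k), ∃ C : ℝ, 0 ≤ C ∧ ∀ h : ℝ, 0 < h → h ≤ 1 →
        ∀ s : Set ℝ, volume s ≤ 1 →
        eLpNorm (fun x => finiteDiff r h (bspline k (ξ k l)) x) (ENNReal.ofReal p)
          (volume.restrict s) ≤ ENNReal.ofReal (C * h ^ γ) := fun k hk l =>
      single_bound k (ξ k l) (hξ k hk l) hp hr1 (hkfacts k hk).1 hγr (hkfacts k hk).2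
    choose! Cq hCq0 hCq using hex
    refine ⟨∑ k ∈ S, ∑ l, |β k l| * Cq k l,
      Finset.sum_nonneg fun k hk => Finset.sum_nonneg fun l _ =>
        mul_nonneg (abs_nonneg _) (hCq0 k hk l), fun h hh h1 s hvs => ?_⟩
    have hdecomp : (fun x => finiteDiff r h f x)
        = ∑ k ∈ S, ∑ l, (fun x => β k l * finiteDiff r h (bspline k (ξ k l)) x) := by
      funext x
      rw [hfdef]
      rw [finiteDiff_sum]
      rw [Finset.sum_apply]
      refine Finset.sum_congr rfl fun k hk => ?_
      rw [finiteDiff_sum, Finset.sum_apply]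
      refine Finset.sum_congr rfl fun l _ => ?_
      rw [finiteDiff_const_mul]
    rw [hdecomp]
    have hmeas1 : ∀ k ∈ S, AEStronglyMeasurable
        (∑ l, (fun x => β k l * finiteDiff r h (bspline k (ξ k l)) x))
        (volume.restrict s) := by
      intro k _
      have hps : (∑ l, (fun x => β k l * finiteDiff r h (bspline k (ξ k l)) x))
          = fun x => ∑ l, β k l * finiteDiff r h (bspline k (ξ k l)) x := by
        funext x; exact Finset.sum_apply _ _ _
      rw [hps]
      exact (Finset.measurable_sum Finset.univ fun l _ =>
        measurable_const.mul (measurable_finiteDiff r h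
          (measurable_bspline _ _))).aestronglyMeasurable
    refine le_trans (eLpNorm_sum_le (fun k hk => hmeas1 k hk)
      (ENNReal.one_le_ofReal.mpr hp)) ?_
    have hsum2 : ∀ k ∈ S, eLpNorm
        (∑ l, (fun x => β k l * finiteDiff r h (bspline k (ξ k l)) x))
        (ENNReal.ofReal p) (volume.restrict s)
        ≤ ENNReal.ofReal ((∑ l, |β k l| * Cq k l) * h ^ γ) := by
      intro k hk
      refine le_trans (eLpNorm_sum_le (fun l _ =>
        (measurable_const.mul (measurable_finiteDiff r h
          (measurable_bspline _ _))).aestronglyMeasurable)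
        (ENNReal.one_le_ofReal.mpr hp)) ?_
      have hterm : ∀ l : Fin (J k), eLpNorm
          (fun x => β k l * finiteDiff r h (bspline k (ξ k l)) x)
          (ENNReal.ofReal p) (volume.restrict s)
          ≤ ENNReal.ofReal (|β k l| * Cq k l * h ^ γ) := by
        intro l
        have hsm : (fun x => β k l * finiteDiff r h (bspline k (ξ k l)) x)
            = β k l • (fun x => finiteDiff r h (bspline k (ξ k l)) x) := rfl
        rw [hsm, eLpNorm_const_smul]
        calc (‖β k l‖₊ : ℝ≥0∞) * eLpNorm (fun x => finiteDiff r h (bspline k (ξ k l)) x)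
              (ENNReal.ofReal p) (volume.restrict s)
            ≤ ENNReal.ofReal (|β k l|) * ENNReal.ofReal (Cq k l * h ^ γ) := by
              refine mul_le_mul' ?_ (hCq k hk l h hh h1 s hvs)
              rw [← enorm_eq_nnnorm, ← ofReal_norm, Real.norm_eq_abs]
          _ = ENNReal.ofReal (|β k l| * Cq k l * h ^ γ) := by
              rw [← ENNReal.ofReal_mul (abs_nonneg _), mul_assoc]
      refine le_trans (Finset.sum_le_sum fun l _ => hterm l) ?_
      rw [← ENNReal.ofReal_sum_of_nonneg fun l _ => mul_nonneg
        (mul_nonneg (abs_nonneg _) (hCq0 k hk l)) (Real.rpow_nonneg hh.le _),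
        Finset.sum_mul]
    refine le_trans (Finset.sum_le_sum hsum2) ?_
    rw [← ENNReal.ofReal_sum_of_nonneg fun k hk => by
        refine mul_nonneg (Finset.sum_nonneg fun l _ =>
          mul_nonneg (abs_nonneg _) (hCq0 k hk l)) (by positivity),
      Finset.sum_mul]
  obtain ⟨Ct, hCt0, hkey⟩ := key
  -- crude eLpNorm bound
  have crude : ∀ h : ℝ, ∀ s : Set ℝ, volume s ≤ 1 →
      eLpNorm (fun x => finiteDiff r h f x) (ENNReal.ofReal p) (volume.restrict s)
        ≤ ENNReal.ofReal (2 ^ r * Mf) := by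
    intro h s hvs
    have hpt : ∀ᵐ x ∂(volume.restrict s), ‖finiteDiff r h f x‖ ≤ 2 ^ r * Mf :=
      ae_of_all _ fun x => by rw [Real.norm_eq_abs]; exact finiteDiff_abs_le hMf
    refine le_trans (eLpNorm_le_of_ae_bound hpt) ?_
    calc (volume.restrict s) Set.univ ^ (ENNReal.ofReal p).toReal⁻¹
          * ENNReal.ofReal (2 ^ r * Mf)
        ≤ 1 * ENNReal.ofReal (2 ^ r * Mf) := by
          refine mul_le_mul_left (ENNReal.rpow_le_one ?_ (by positivity)) _
          rw [Measure.restrict_apply_univ]; exact hvs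
      _ = ENNReal.ofReal (2 ^ r * Mf) := one_mul _
  -- real-integral bounds
  have hInt : ∀ h : ℝ, 0 < h → 0 < 1 - r * h →
      (∫ x in Set.Ioo (0:ℝ) (1 - r * h), |finiteDiff r h f x| ^ p) ^ (1/p) ≤ Ct * h ^ γ ∧
      (∫ x in Set.Ioo (0:ℝ) (1 - r * h), |finiteDiff r h f x| ^ p) ^ (1/p) ≤ 2 ^ r * Mf := by
    intro h hh hpos
    have hs1 : volume (Set.Ioo (0:ℝ) (1 - r * h)) ≤ 1 := by
      rw [Real.volume_Ioo]
      refine ENNReal.ofReal_le_one.mpr ?_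
      have : (0:ℝ) ≤ r * h := by positivity
      linarith
    have hbridge := integral_rpow_eq_toReal (measurable_finiteDiff r h hfmeas)
      (fun x => finiteDiff_abs_le hMf) hp _ hs1
    have hle1 : h ≤ 1 := by
      have h1 : h ≤ (r:ℝ) * h := le_mul_of_one_le_left hh.le (by exact_mod_cast hr1)
      linarith
    constructor
    · rw [hbridge]
      exact ENNReal.toReal_le_of_le_ofReal (by positivity) (hkey h hh hle1 _ hs1)
    · rw [hbridge]
      exact ENNReal.toReal_le_of_le_ofReal (by positivity) (crude h _ hs1)
  have hms1 : ∀ t : ℝ, 0 < t → modSmooth p r f t ≤ Ct * t ^ γ := by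
    intro t ht
    refine modSmooth_le hp r f (by positivity) fun h hh hht hpos => ?_
    refine le_trans (hInt h hh hpos).1 ?_
    exact mul_le_mul_of_nonneg_left (Real.rpow_le_rpow hh.le hht hγ0.le) hCt0
  have hms2 : ∀ t : ℝ, modSmooth p r f t ≤ 2 ^ r * Mf := by
    intro t
    refine modSmooth_le hp r f (by positivity) fun h hh hht hpos => (hInt h hh hpos).2
  constructor
  · -- Memℒp
    haveI : IsFiniteMeasure (volume.restrict (Set.Icc (0:ℝ) 1)) :=
      ⟨by rw [Measure.restrict_apply_univ]; exact measure_Icc_lt_top⟩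
    exact MemLp.of_bound hfmeas.aestronglyMeasurable Mf
      (ae_of_all _ fun x => by rw [Real.norm_eq_abs]; exact hMf x)
  · -- Besov seminorm
    rw [besovSeminorm]
    refine ENNReal.rpow_lt_top_of_nonneg (by positivity) ?_
    rw [← hrdef]
    set F : ℝ → ℝ≥0∞ := fun t =>
      ENNReal.ofReal ((t ^ (-α) * modSmooth p r f t) ^ q / t) with hFdef
    have hsplit : ∫⁻ t in Set.Ioi (0:ℝ), F t
        ≤ (∫⁻ t in Set.Ioc (0:ℝ) 1, F t) + ∫⁻ t in Set.Ioi (1:ℝ), F t := by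
      rw [← Set.Ioc_union_Ioi_eq_Ioi (zero_le_one)]
      exact lintegral_union_le _ _ _
    refine ne_of_lt (lt_of_le_of_lt hsplit (ENNReal.add_lt_top.mpr ⟨?_, ?_⟩))
    · -- near zero
      have hmono : ∫⁻ t in Set.Ioc (0:ℝ) 1, F t
          ≤ ∫⁻ t in Set.Ioc (0:ℝ) 1,
            ENNReal.ofReal (Ct ^ q * t ^ ((γ - α) * q - 1)) := by
        refine setLIntegral_mono' measurableSet_Ioc fun t ht => ?_
        obtain ⟨ht0, ht1⟩ := ht
        refine ENNReal.ofReal_le_ofReal ?_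
        have hω0 := modSmooth_nonneg p r f t
        have htα : (0:ℝ) ≤ t ^ (-α) := Real.rpow_nonneg ht0.le _
        have e1 : t ^ (-α) * modSmooth p r f t ≤ Ct * t ^ (γ - α) := by
          refine le_trans (mul_le_mul_of_nonneg_left (hms1 t ht0) htα) ?_
          rw [show γ - α = -α + γ by ring, Real.rpow_add ht0]
          exact le_of_eq (by ring)
        have e2 : (t ^ (-α) * modSmooth p r f t) ^ q ≤ Ct ^ q * t ^ ((γ - α) * q) := by
          refine le_trans (Real.rpow_le_rpow (by positivity) e1 hq0.le) ?_
          rw [Real.mul_rpow hCt0 (Real.rpow_nonneg ht0.le _),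
            ← Real.rpow_mul ht0.le]
        calc (t ^ (-α) * modSmooth p r f t) ^ q / t
            ≤ (Ct ^ q * t ^ ((γ - α) * q)) / t := by gcongr
          _ = Ct ^ q * t ^ ((γ - α) * q - 1) := by
              rw [Real.rpow_sub ht0, Real.rpow_one, mul_div_assoc]
      refine lt_of_le_of_lt hmono ?_
      have hie : IntegrableOn (fun t => Ct ^ q * t ^ ((γ - α) * q - 1))
          (Set.Ioc (0:ℝ) 1) volume := by
        have hexp : (-1:ℝ) < (γ - α) * q - 1 := by nlinarith
        have := (intervalIntegral.intervalIntegrable_rpow' (a := 0) (b := 1) hexp).const_mul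
          (Ct ^ q)
        rwa [intervalIntegrable_iff, Set.uIoc_of_le zero_le_one] at this
      exact hie.lintegral_lt_top
    · -- near infinity
      have hmono : ∫⁻ t in Set.Ioi (1:ℝ), F t
          ≤ ∫⁻ t in Set.Ioi (1:ℝ),
            ENNReal.ofReal ((2 ^ r * Mf) ^ q * t ^ (-α * q - 1)) := by
        refine setLIntegral_mono' measurableSet_Ioi fun t ht => ?_
        have ht0 : (0:ℝ) < t := lt_trans one_pos ht
        refine ENNReal.ofReal_le_ofReal ?_
        have hω0 := modSmooth_nonneg p r f t
        have htα : (0:ℝ) ≤ t ^ (-α) := Real.rpow_nonneg ht0.le _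
        have e1 : t ^ (-α) * modSmooth p r f t ≤ (2 ^ r * Mf) * t ^ (-α) := by
          rw [mul_comm ((2:ℝ) ^ r * Mf) (t ^ (-α))]
          exact mul_le_mul_of_nonneg_left (hms2 t) htα
        have e2 : (t ^ (-α) * modSmooth p r f t) ^ q
            ≤ (2 ^ r * Mf) ^ q * t ^ (-α * q) := by
          refine le_trans (Real.rpow_le_rpow (by positivity) e1 hq0.le) ?_
          rw [Real.mul_rpow (by positivity) (Real.rpow_nonneg ht0.le _),
            ← Real.rpow_mul ht0.le]
        calc (t ^ (-α) * modSmooth p r f t) ^ q / t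
            ≤ ((2 ^ r * Mf) ^ q * t ^ (-α * q)) / t := by gcongr
          _ = (2 ^ r * Mf) ^ q * t ^ (-α * q - 1) := by
              rw [Real.rpow_sub ht0, Real.rpow_one, mul_div_assoc]
      refine lt_of_le_of_lt hmono ?_
      have hie : IntegrableOn (fun t => (2 ^ r * Mf) ^ q * t ^ (-α * q - 1))
          (Set.Ioi (1:ℝ)) volume := by
        have hexp : -α * q - 1 < -1 := by nlinarith
        exact (integrableOn_Ioi_rpow_of_lt hexp one_pos).const_mul _
      exact hie.lintegral_lt_top
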